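/- Let u_j, j ∈ ℤ/Nℤ, solve the Hamiltonian-based semi-discrete scheme (u_j)_tt + c(u_j)c'(u_j)(D⁰u_j)² − D⁰(c(u_j)²D⁰u_j) = 0, where D⁰z_j = (z_{j+1} − z_{j−1})/(2Δx). Then the discrete energy (Δx/2)Σ_j[((u_j)_t)² + c(u_j)²(D⁰u_j)²] is constant in time. -/

import Mathlib

open Finset

/-- The Hamiltonian-based semi-discrete scheme
`(u_j)_tt + c(u_j)c'(u_j)(D⁰u_j)² − D⁰(c(u_j)² D⁰u_j) = 0`, with
`D⁰z_j = (z_{j+1} − z_{j−1})/(2Δx)`, conserves the discrete energy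
`(Δx/2) Σ_j [((u_j)_t)² + c(u_j)² (D⁰u_j)²]`. -/
theorem discrete_energy_conservation_hamiltonian
    (N : ℕ) [NeZero N] (Δx : ℝ) (hΔx : 0 < Δx)
    (c : ℝ → ℝ) (hc : ContDiff ℝ 1 c)
    (u ut : ZMod N → ℝ → ℝ)  -- grid index, time
    (hut : ∀ j t, HasDerivAt (u j) (ut j t) t)
    (hscheme : ∀ j t, HasDerivAt (ut j)
      (-(c (u j t) * deriv c (u j t) * ((u (j+1) t - u (j-1) t)/(2*Δx)) ^ 2)
       + ((c (u (j+1) t) ^ 2 * ((u (j+1+1) t - u j t)/(2*Δx)))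
          - (c (u (j-1) t) ^ 2 * ((u j t - u (j-1-1) t)/(2*Δx)))) / (2*Δx)) t) :
    ∀ t : ℝ, HasDerivAt
      (fun s => Δx/2 * ∑ j : ZMod N,
        (ut j s ^ 2 + c (u j s) ^ 2 * ((u (j+1) s - u (j-1) s)/(2*Δx)) ^ 2)) 0 t := by
  intro t
  have hc' : ∀ x, HasDerivAt c (deriv c x) x := fun x => (hc.differentiable one_ne_zero x).hasDerivAt
  -- derivative of each summand
  have hterm : ∀ j : ZMod N, HasDerivAt
      (fun s => ut j s ^ 2 + c (u j s) ^ 2 * ((u (j+1) s - u (j-1) s)/(2*Δx)) ^ 2)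
      (2 * ut j t ^ 1 *
        (-(c (u j t) * deriv c (u j t) * ((u (j+1) t - u (j-1) t)/(2*Δx)) ^ 2)
         + ((c (u (j+1) t) ^ 2 * ((u (j+1+1) t - u j t)/(2*Δx)))
            - (c (u (j-1) t) ^ 2 * ((u j t - u (j-1-1) t)/(2*Δx)))) / (2*Δx))
       + ((2 * c (u j t) ^ 1 * (deriv c (u j t) * ut j t)) *
            ((u (j+1) t - u (j-1) t)/(2*Δx)) ^ 2
          + c (u j t) ^ 2 *
            (2 * ((u (j+1) t - u (j-1) t)/(2*Δx)) ^ 1 *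
              ((ut (j+1) t - ut (j-1) t)/(2*Δx))))) t := by
    intro j
    have hcu : HasDerivAt (fun s => c (u j s)) (deriv c (u j t) * ut j t) t :=
      (hc' (u j t)).comp t (hut j t)
    have hD : HasDerivAt (fun s => (u (j+1) s - u (j-1) s)/(2*Δx))
        ((ut (j+1) t - ut (j-1) t)/(2*Δx)) t :=
      ((hut (j+1) t).sub (hut (j-1) t)).div_const _
    exact ((hscheme j t).pow 2).add ((hcu.pow 2).mul (hD.pow 2))
  have hsum := (HasDerivAt.fun_sum (fun j (_ : j ∈ Finset.univ) => hterm j)).const_mul (Δx/2)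
  -- shift invariance of sums over ZMod N
  have shift : ∀ g : ZMod N → ℝ, ∑ j : ZMod N, g (j - 1) = ∑ j : ZMod N, g j := fun g =>
    Fintype.sum_equiv (Equiv.subRight 1) _ _ (fun j => rfl)
  set F : ZMod N → ℝ := fun j => c (u j t) ^ 2 * ((u (j+1) t - u (j-1) t)/(2*Δx)) with hF
  set A : ZMod N → ℝ := fun j => ut j t * F (j+1) / Δx with hA
  set B : ZMod N → ℝ := fun j => ut (j+1) t * F j / Δx with hB
  have hzero : (Δx/2) * (∑ j : ZMod N,
      (2 * ut j t ^ 1 *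
        (-(c (u j t) * deriv c (u j t) * ((u (j+1) t - u (j-1) t)/(2*Δx)) ^ 2)
         + ((c (u (j+1) t) ^ 2 * ((u (j+1+1) t - u j t)/(2*Δx)))
            - (c (u (j-1) t) ^ 2 * ((u j t - u (j-1-1) t)/(2*Δx)))) / (2*Δx))
       + ((2 * c (u j t) ^ 1 * (deriv c (u j t) * ut j t)) *
            ((u (j+1) t - u (j-1) t)/(2*Δx)) ^ 2
          + c (u j t) ^ 2 *
            (2 * ((u (j+1) t - u (j-1) t)/(2*Δx)) ^ 1 *
              ((ut (j+1) t - ut (j-1) t)/(2*Δx)))))) = 0 := by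
    have hrw : ∀ j : ZMod N,
        (2 * ut j t ^ 1 *
          (-(c (u j t) * deriv c (u j t) * ((u (j+1) t - u (j-1) t)/(2*Δx)) ^ 2)
           + ((c (u (j+1) t) ^ 2 * ((u (j+1+1) t - u j t)/(2*Δx)))
              - (c (u (j-1) t) ^ 2 * ((u j t - u (j-1-1) t)/(2*Δx)))) / (2*Δx))
         + ((2 * c (u j t) ^ 1 * (deriv c (u j t) * ut j t)) *
              ((u (j+1) t - u (j-1) t)/(2*Δx)) ^ 2
            + c (u j t) ^ 2 *
              (2 * ((u (j+1) t - u (j-1) t)/(2*Δx)) ^ 1 *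
                ((ut (j+1) t - ut (j-1) t)/(2*Δx)))))
        = (A j - A (j-1)) + (B j - B (j-1)) := by
      intro j
      have h1 : j + 1 - 1 = j := by ring
      have h2 : j - 1 + 1 = j := by ring
      simp only [hA, hB, hF, h1, h2]
      have h2Δx : (2*Δx) ≠ 0 := by positivity
      field_simp
      ring
    rw [Finset.sum_congr rfl (fun j _ => hrw j)]
    rw [Finset.sum_add_distrib, Finset.sum_sub_distrib, Finset.sum_sub_distrib,
      shift A, shift B]
    ring
  exact hzero ▸ hsum
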